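/- For every μ ∈ (0, π/4) and every natural number k there exists a constant C > 0 such that for all real s > 0 and all nonzero complex numbers z with |arg z| ≤ μ, the (k+1)-st complex derivative at z of the entire function w ↦ e^{-w²/s} satisfies |d^{k+1}/dw^{k+1} (e^{-w²/s})(z)| ≤ C · s^{-(k+1)/2} · e^{-cos(2μ)·|z|²/(2s)}. -/

import Mathlib

open Complex Real

private theorem gaussian_circle_bound (μ : ℝ) (hμ0 : 0 < μ) (hμπ : μ < Real.pi/4) (s : ℝ)
    (hs : 0 < s) (z : ℂ) (hz : z ≠ 0) (harg : |z.arg| ≤ μ) (θ : ℝ) :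
    ‖Complex.exp (-(circleMap z (Real.sqrt s) θ ^ 2 / (s : ℂ)))‖ ≤
      Real.exp (1 + 2 / Real.cos (2*μ)) *
        Real.exp (-(Real.cos (2*μ) * ‖z‖ ^ 2 / (2 * s))) := by
  set c := Real.cos (2*μ) with hcdef
  have hc : 0 < c := Real.cos_pos_of_mem_Ioo ⟨by linarith [Real.pi_pos], by linarith⟩
  set R := Real.sqrt s with hRdef
  have hR : 0 < R := Real.sqrt_pos.2 hs
  have hR2 : R ^ 2 = s := Real.sq_sqrt hs.le
  set u := circleMap z R θ with hu
  set ζ := circleMap 0 R θ with hζ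
  have hζabs : ‖ζ‖ = R := by
    rw [hζ]
    simpa [abs_of_pos hR] using norm_circleMap_zero R θ
  have huz : u = z + ζ := by simp [hu, hζ, circleMap]
  have hre : (z ^ 2).re ≥ c * ‖z‖ ^ 2 := by
    have h1 : z.re = ‖z‖ * Real.cos z.arg := by
      rw [Complex.cos_arg hz, mul_comm, div_mul_cancel₀ _ (norm_ne_zero_iff.mpr hz)]
    have h2 : z.im = ‖z‖ * Real.sin z.arg := by
      rw [Complex.sin_arg, mul_comm, div_mul_cancel₀ _ (norm_ne_zero_iff.mpr hz)]
    have h3 : (z ^ 2).re = z.re ^ 2 - z.im ^ 2 := by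
      simp [pow_two, Complex.mul_re]
    have h4 : Real.cos (2 * z.arg) = Real.cos z.arg ^ 2 - Real.sin z.arg ^ 2 :=
      Real.cos_two_mul' _
    have h5 : c ≤ Real.cos (2 * z.arg) := by
      have := Real.cos_le_cos_of_nonneg_of_le_pi (abs_nonneg (2 * z.arg))
        (by linarith [Real.pi_pos] : 2*μ ≤ Real.pi)
        (by rw [abs_mul]; simp; linarith [abs_nonneg z.arg] : |2 * z.arg| ≤ 2*μ)
      rwa [Real.cos_abs] at this
    have h6 : (z ^ 2).re = ‖z‖ ^ 2 * Real.cos (2 * z.arg) := by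
      rw [h3, h4, h1, h2]; ring
    rw [h6]
    nlinarith [sq_nonneg (‖z‖), norm_nonneg z]
  have hre2 : (u ^ 2).re ≥ c / 2 * ‖z‖ ^ 2 - (1 + 2/c) * s := by
    have hexp : u ^ 2 = z ^ 2 + 2 * (z * ζ) + ζ ^ 2 := by rw [huz]; ring
    have h1 : (z * ζ).re ≥ -(‖z‖ * R) := by
      have ha := Complex.abs_re_le_norm (z * ζ)
      have hb := neg_abs_le ((z * ζ).re)
      rw [norm_mul, hζabs] at ha; linarith [abs_nonneg ((z*ζ).re)]
    have h2 : (ζ ^ 2).re ≥ -(R^2) := by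
      have ha := Complex.abs_re_le_norm (ζ ^ 2)
      have hb := neg_abs_le ((ζ ^ 2).re)
      rw [norm_pow, hζabs] at ha; linarith [abs_nonneg ((ζ^2).re)]
    have h3 : (u ^ 2).re = (z ^ 2).re + 2 * (z * ζ).re + (ζ ^ 2).re := by
      rw [hexp]; simp
    have h2c : c * (2/c) = 2 := by field_simp
    have hamgm : 2 * (‖z‖ * R) ≤ c/2 * ‖z‖ ^2 + 2/c * R^2 := by
      nlinarith [sq_nonneg (c * ‖z‖ - 2 * R), hc, h2c]
    rw [h3, ← hR2]; nlinarith
  rw [Complex.norm_exp, ← Real.exp_add, Real.exp_le_exp]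
  have hre3 : (-(u ^ 2 / (s:ℂ))).re = -((u^2).re / s) := by simp
  rw [hre3]
  have key : c * ‖z‖ ^ 2 / (2 * s) - (1 + 2 / c) ≤ (u ^ 2).re / s := by
    rw [le_div_iff₀ hs]
    have he : (c * ‖z‖ ^ 2 / (2 * s) - (1 + 2 / c)) * s
        = c/2 * ‖z‖ ^2 - (1+2/c)*s := by field_simp
    rw [he]; linarith [hre2]
  linarith [key]

private theorem gaussian_cauchy_est (s : ℝ) (hs : 0 < s) (z : ℂ) (n : ℕ) (M : ℝ) (hM0 : 0 ≤ M)
    (hM : ∀ θ : ℝ, ‖Complex.exp (-(circleMap z (Real.sqrt s) θ ^ 2 / (s : ℂ)))‖ ≤ M) :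
    ‖iteratedDeriv n (fun w : ℂ => Complex.exp (-(w ^ 2 / (s : ℂ)))) z‖ ≤
      (n.factorial : ℝ) * M * (Real.sqrt s)⁻¹ ^ n := by
  set f : ℂ → ℂ := fun w => Complex.exp (-(w ^ 2 / (s : ℂ))) with hf
  have hdf : Differentiable ℂ f := by
    apply Complex.differentiable_exp.comp
    exact ((differentiable_pow 2).div_const _).neg
  set R : ℝ := Real.sqrt s with hRdef
  have hR : 0 < R := Real.sqrt_pos.2 hs
  set Rn : NNReal := ⟨R, hR.le⟩ with hRn
  have hps : HasFPowerSeriesOnBall f (cauchyPowerSeries f z Rn) z ⊤ :=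
    hdf.hasFPowerSeriesOnBall z (by exact_mod_cast hR)
  set p := cauchyPowerSeries f z Rn with hp
  have h1 : iteratedDeriv n f z = n.factorial • (p n fun _ => (1:ℂ)) := by
    rw [iteratedDeriv_eq_iteratedFDeriv, ← hps.factorial_smul (1:ℂ) n]
  have h2 : ‖p n fun _ => (1:ℂ)‖ ≤ ‖p n‖ := by
    have := (p n).le_opNorm fun _ => (1:ℂ)
    simpa using this
  have h3 : ‖p n‖ ≤ ((2 * π)⁻¹ * ∫ θ : ℝ in (0)..2 * π, ‖f (circleMap z R θ)‖) * |R|⁻¹ ^ n := by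
    have := norm_cauchyPowerSeries_le f z Rn n
    exact this
  have hint : IntervalIntegrable (fun θ => ‖f (circleMap z R θ)‖) MeasureTheory.volume 0 (2*π) :=
    ((hdf.continuous.comp (continuous_circleMap z R)).norm).intervalIntegrable _ _
  have h4 : (∫ θ : ℝ in (0)..2 * π, ‖f (circleMap z R θ)‖) ≤ 2 * π * M := by
    calc (∫ θ : ℝ in (0)..2 * π, ‖f (circleMap z R θ)‖)
        ≤ ∫ _ : ℝ in (0)..2 * π, M :=
          intervalIntegral.integral_mono_on Real.two_pi_pos.le hint
            intervalIntegrable_const (fun θ _ => hM θ)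
      _ = 2 * π * M := by simp [mul_comm]
  have h5 : (2 * π)⁻¹ * ∫ θ : ℝ in (0)..2 * π, ‖f (circleMap z R θ)‖ ≤ M := by
    rw [inv_mul_le_iff₀ Real.two_pi_pos]
    linarith [h4]
  calc ‖iteratedDeriv n f z‖ = (n.factorial : ℝ) * ‖p n fun _ => (1:ℂ)‖ := by
        rw [h1, nsmul_eq_mul, norm_mul]; simp
    _ ≤ (n.factorial : ℝ) * ‖p n‖ := by
        exact mul_le_mul_of_nonneg_left h2 (by positivity)
    _ ≤ (n.factorial : ℝ) * (((2 * π)⁻¹ * ∫ θ : ℝ in (0)..2 * π, ‖f (circleMap z R θ)‖) * |R|⁻¹ ^ n) :=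
        mul_le_mul_of_nonneg_left h3 (by positivity)
    _ ≤ (n.factorial : ℝ) * (M * |R|⁻¹ ^ n) := by
        apply mul_le_mul_of_nonneg_left _ (by positivity)
        exact mul_le_mul_of_nonneg_right h5 (by positivity)
    _ = (n.factorial : ℝ) * M * R⁻¹ ^ n := by rw [abs_of_pos hR]; ring

/-- Sector version of the Gaussian derivative bound: for `0 < μ < π/4` and `k ∈ ℕ`
there is `C > 0` such that for all `s > 0` and all nonzero `z ∈ ℂ` with `|arg z| ≤ μ`,
`|d^{k+1}/dw^{k+1}(e^{-w²/s})(z)| ≤ C s^{-(k+1)/2} e^{-cos(2μ)|z|²/(2s)}`. -/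
theorem gaussian_iteratedDeriv_bound_sector (μ : ℝ) (hμ : μ ∈ Set.Ioo 0 (Real.pi / 4)) (k : ℕ) :
    ∃ C > 0, ∀ s : ℝ, 0 < s → ∀ z : ℂ, z ≠ 0 → |z.arg| ≤ μ →
      ‖iteratedDeriv (k + 1) (fun w : ℂ => Complex.exp (-(w ^ 2 / (s : ℂ)))) z‖ ≤
        C * s ^ (-((k : ℝ) + 1) / 2) *
          Real.exp (-(Real.cos (2 * μ) * ‖z‖ ^ 2 / (2 * s))) := by
  obtain ⟨hμ0, hμπ⟩ := hμ
  refine ⟨((k+1).factorial : ℝ) * Real.exp (1 + 2 / Real.cos (2*μ)), by positivity, ?_⟩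
  intro s hs z hz harg
  have hM := gaussian_circle_bound μ hμ0 hμπ s hs z hz harg
  have hest := gaussian_cauchy_est s hs z (k+1)
    (Real.exp (1 + 2 / Real.cos (2*μ)) * Real.exp (-(Real.cos (2*μ) * ‖z‖ ^ 2 / (2 * s))))
    (by positivity) hM
  have hsqrt : (Real.sqrt s)⁻¹ ^ (k+1) = s ^ (-((k:ℝ)+1)/2) := by
    rw [← Real.rpow_natCast ((Real.sqrt s)⁻¹) (k+1), ← Real.rpow_neg_one (Real.sqrt s),
      Real.sqrt_eq_rpow, ← Real.rpow_mul hs.le, ← Real.rpow_mul hs.le]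
    congr 1
    push_cast
    ring
  calc ‖iteratedDeriv (k+1) (fun w : ℂ => Complex.exp (-(w ^ 2 / (s : ℂ)))) z‖
      ≤ ((k+1).factorial : ℝ) *
          (Real.exp (1 + 2 / Real.cos (2*μ)) *
            Real.exp (-(Real.cos (2*μ) * ‖z‖ ^ 2 / (2 * s)))) *
          (Real.sqrt s)⁻¹ ^ (k+1) := hest
    _ = ((k+1).factorial : ℝ) * Real.exp (1 + 2 / Real.cos (2*μ)) * s ^ (-((k:ℝ)+1)/2) *
          Real.exp (-(Real.cos (2*μ) * ‖z‖ ^ 2 / (2 * s))) := by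
        rw [hsqrt]; ring
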